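/- For every valid configuration c, the optimal tree is reachable from c: t*(c) ∈ D(c). (Lemma 2.) -/

import Mathlib

/-!
Formalization of the span-based Structure/Label transition parsing system of
Cross & Huang (2016), "Span-Based Constituency Parsing with a Structure-Label
System and Provably Optimal Dynamic Oracles".

A configuration is `(z, σ, t)` where `z` is the step number, `σ` the stack of
span boundaries and `t` the set of brackets built so far.  A bracket is a
triple `(X, i, j)` with `X` a nonterminal label and `i < j ≤ n` a span.
-/

namespace SpanParser

structure Config (N : Type*) where
  z : ℕ
  σ : List ℕ
  t : Finset (N × ℕ × ℕ)

variable {N : Type*}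

/-- The span of a bracket. -/
def span (b : N × ℕ × ℕ) : ℕ × ℕ := b.2

/-- Top (rightmost) boundary of the stack. -/
def topJ (σ : List ℕ) : ℕ := σ.getLastD 0

/-- Second-to-top boundary of the stack. -/
def topI (σ : List ℕ) : ℕ := σ.dropLast.getLastD 0

/-- Parser actions: shift, combine, label-`X`, and nolabel. -/
inductive Action (N : Type*) where
  | sh : Action N
  | comb : Action N
  | label : N → Action N
  | nolabel : Action N

variable [DecidableEq N]

/-- Applicability of an action at a configuration (for sentence length `n`). -/
def App (n : ℕ) (c : Config N) : Action N → Prop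
  | .sh      => Even c.z ∧ c.σ ≠ [] ∧ topJ c.σ < n
  | .comb    => Even c.z ∧ 3 ≤ c.σ.length
  | .label _ => Odd c.z ∧ 2 ≤ c.σ.length
  | .nolabel => Odd c.z ∧ 2 ≤ c.σ.length ∧ c.z < 4 * n - 1

/-- The result `τ(c)` of applying action `τ` to configuration `c`. -/
def doAct (c : Config N) : Action N → Config N
  | .sh      => ⟨c.z + 1, c.σ ++ [topJ c.σ + 1], c.t⟩
  | .comb    => ⟨c.z + 1, c.σ.dropLast.dropLast ++ [topJ c.σ], c.t⟩
  | .label X => ⟨c.z + 1, c.σ, insert (X, topI c.σ, topJ c.σ) c.t⟩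
  | .nolabel => ⟨c.z + 1, c.σ, c.t⟩

/-- The initial configuration `(0, [0], ∅)`. -/
def initial (N : Type*) : Config N := ⟨0, [0], ∅⟩

/-- One transition step `c ⊢ c'`. -/
def Step (n : ℕ) (c c' : Config N) : Prop := ∃ a, App n c a ∧ c' = doAct c a

/-- `⊢*`: reflexive-transitive closure of the transition relation. -/
def Reaches (n : ℕ) : Config N → Config N → Prop := Relation.ReflTransGen (Step n)

/-- A configuration is valid if it is reachable from the initial configuration. -/
def Valid (n : ℕ) (c : Config N) : Prop := Reaches n (initial N) c

/-- A final configuration: `σ = [0, n]` and `z = 4n - 2`. -/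
def Final (n : ℕ) (c : Config N) : Prop := c.σ = [0, n] ∧ c.z = 4 * n - 2

/-- `D(c)`: the set of trees of final configurations reachable from `c`. -/
def Dset (n : ℕ) (c : Config N) : Set (Finset (N × ℕ × ℕ)) :=
  {t' | ∃ c', Reaches n c c' ∧ Final n c' ∧ c'.t = t'}

/-- `(i,j) ⪯ (p,q)`: span `(i,j)` is encompassed by `(p,q)`, i.e. `p ≤ i < j ≤ q`. -/
def Enc (s₁ s₂ : ℕ × ℕ) : Prop := s₂.1 ≤ s₁.1 ∧ s₁.1 < s₁.2 ∧ s₁.2 ≤ s₂.2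

/-- `(i,j) ≺ (p,q)`: strict encompassment. -/
def SEnc (s₁ s₂ : ℕ × ℕ) : Prop := Enc s₁ s₂ ∧ s₁ ≠ s₂

/-- `tG` is a gold tree for sentence length `n`: valid spans, pairwise-distinct
spans, pairwise non-crossing spans, and exactly one bracket with span `(0, n)`
(uniqueness follows from distinctness of spans). -/
structure IsGold (n : ℕ) (tG : Finset (N × ℕ × ℕ)) : Prop where
  validSpans : ∀ b ∈ tG, (span b).1 < (span b).2 ∧ (span b).2 ≤ n
  distinctSpans : ∀ b₁ ∈ tG, ∀ b₂ ∈ tG, span b₁ = span b₂ → b₁ = b₂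
  noncrossing : ∀ b₁ ∈ tG, ∀ b₂ ∈ tG,
    Enc (span b₁) (span b₂) ∨ Enc (span b₂) (span b₁) ∨
    (span b₁).2 ≤ (span b₂).1 ∨ (span b₂).2 ≤ (span b₁).1
  root : ∃ X, (X, 0, n) ∈ tG

open Classical in
/-- `left(c)`: gold brackets (strictly, at even steps) encompassing the top
span whose left boundary occurs on the stack. -/
noncomputable def leftSet (tG : Finset (N × ℕ × ℕ)) (c : Config N) :
    Finset (N × ℕ × ℕ) :=
  tG.filter fun b =>
    (if Even c.z then SEnc (topI c.σ, topJ c.σ) (span b)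
     else Enc (topI c.σ, topJ c.σ) (span b)) ∧ (span b).1 ∈ c.σ

open Classical in
/-- `right(c)`: gold brackets entirely on the queue. -/
noncomputable def rightSet (tG : Finset (N × ℕ × ℕ)) (c : Config N) :
    Finset (N × ℕ × ℕ) :=
  tG.filter fun b => topJ c.σ ≤ (span b).1

open Classical in
/-- `reach(c)`: the reachable gold brackets (all of `t_G` at the initial
configuration, whose stack has fewer than two boundaries). -/
noncomputable def reach (tG : Finset (N × ℕ × ℕ)) (c : Config N) :
    Finset (N × ℕ × ℕ) :=
  if c.σ.length < 2 then tG else leftSet tG c ∪ rightSet tG c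

/-- The optimal tree `t*(c) = t ∪ reach(c)`. -/
noncomputable def tstar (tG : Finset (N × ℕ × ℕ)) (c : Config N) :
    Finset (N × ℕ × ℕ) :=
  c.t ∪ reach tG c

/-- `b = next(c)`: the `≺`-minimal element of `left(c)`. -/
def IsNext (tG : Finset (N × ℕ × ℕ)) (c : Config N) (b : N × ℕ × ℕ) : Prop :=
  b ∈ leftSet tG c ∧ ∀ b' ∈ leftSet tG c, Enc (span b) (span b')

/-- The dynamic-oracle policy `dyna(c)` as a predicate on actions. -/
def Dyna (tG : Finset (N × ℕ × ℕ)) (c : Config N) (a : Action N) : Prop :=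
  if c.σ.length < 2 then a = Action.sh
  else if Even c.z then
    ∃ b, IsNext tG c b ∧
      (((span b).1 = topI c.σ ∧ topJ c.σ < (span b).2 ∧ a = Action.sh) ∨
       ((span b).1 < topI c.σ ∧ (span b).2 = topJ c.σ ∧ a = Action.comb) ∨
       ((span b).1 < topI c.σ ∧ topJ c.σ < (span b).2 ∧
          (a = Action.sh ∨ a = Action.comb)))
  else
    (∃ X, (X, topI c.σ, topJ c.σ) ∈ tG ∧ a = Action.label X) ∨
    ((∀ X, (X, topI c.σ, topJ c.σ) ∉ tG) ∧ a = Action.nolabel)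

/-- `F1` of a predicted bracket set `t'` against the gold tree `tG`
(`0` when `t' ∩ tG = ∅`). -/
noncomputable def f1 (tG t' : Finset (N × ℕ × ℕ)) : ℝ :=
  if t' ∩ tG = ∅ then 0
  else
    (2 * (((t' ∩ tG).card : ℝ) / (tG.card : ℝ)) * (((t' ∩ tG).card : ℝ) / (t'.card : ℝ))) /
      ((((t' ∩ tG).card : ℝ) / (tG.card : ℝ)) + (((t' ∩ tG).card : ℝ) / (t'.card : ℝ)))

/-- `F1(c)`: the best `F1` among trees reachable from `c`. -/
noncomputable def configF1 (n : ℕ) (tG : Finset (N × ℕ × ℕ)) (c : Config N) : ℝ :=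
  sSup (f1 tG '' Dset n c)

/-- A run of (applicable) actions from one configuration to another. -/
inductive Run (n : ℕ) : Config N → List (Action N) → Config N → Prop
  | refl (c : Config N) : Run n c [] c
  | step {c c' : Config N} {as : List (Action N)} (a : Action N)
      (happ : App n c a) (h : Run n (doAct c a) as c') : Run n c (a :: as) c'

/-- A run all of whose actions follow the dynamic oracle. -/
inductive DynaRun (n : ℕ) (tG : Finset (N × ℕ × ℕ)) : Config N → Config N → Prop
  | refl (c : Config N) : DynaRun n tG c c
  | step {c c' : Config N} (a : Action N) (happ : App n c a) (hdyna : Dyna tG c a)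
      (h : DynaRun n tG (doAct c a) c') : DynaRun n tG c c'

def isSh : Action N → Bool
  | .sh => true
  | _ => false

def isComb : Action N → Bool
  | .comb => true
  | _ => false

/-- Label-step actions: `label-X` or `nolabel`. -/
def isLabelStep : Action N → Bool
  | .label _ => true
  | .nolabel => true
  | _ => false



/-! ### Auxiliary lemmas for the proof of Lemma 2 -/

section OracleProof

variable {N : Type*} [DecidableEq N]

lemma topJ_concat (D : List ℕ) (j : ℕ) : topJ (D ++ [j]) = j :=
  List.getLastD_concat

lemma topJ_concat2 (D : List ℕ) (i j : ℕ) : topJ (D ++ [i, j]) = j := by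
  rw [show D ++ [i, j] = (D ++ [i]) ++ [j] by simp, topJ_concat]

lemma topI_concat2 (D : List ℕ) (i j : ℕ) : topI (D ++ [i, j]) = i := by
  unfold topI
  rw [show D ++ [i, j] = (D ++ [i]) ++ [j] by simp, List.dropLast_concat]
  exact List.getLastD_concat

lemma dropLast_concat2 (D : List ℕ) (i j : ℕ) : (D ++ [i, j]).dropLast = D ++ [i] := by
  rw [show D ++ [i, j] = (D ++ [i]) ++ [j] by simp, List.dropLast_concat]

lemma exists_concat2 {σ : List ℕ} (h : 2 ≤ σ.length) : ∃ D i j, σ = D ++ [i, j] := by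
  rcases σ.eq_nil_or_concat' with rfl | ⟨D', j, rfl⟩
  · simp at h
  rcases D'.eq_nil_or_concat' with rfl | ⟨D, i, rfl⟩
  · simp at h
  exact ⟨D, i, j, by simp⟩

lemma pw_facts {D : List ℕ} {i j : ℕ} (hpw : (D ++ [i, j]).Pairwise (· < ·)) :
    i < j ∧ ∀ x ∈ D, x < i := by
  rw [List.pairwise_append] at hpw
  refine ⟨?_, fun x hx => hpw.2.2 x hx i (by simp)⟩
  have := hpw.2.1
  simp [List.pairwise_cons] at this
  exact this

lemma pw_facts1 {E : List ℕ} {x : ℕ} (hpw : (E ++ [x]).Pairwise (· < ·)) :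
    ∀ y ∈ E, y < x := fun y hy => (List.pairwise_append.1 hpw).2.2 y hy x (by simp)

lemma le_topJ {σ : List ℕ} (hpw : σ.Pairwise (· < ·)) {x : ℕ} (hx : x ∈ σ) :
    x ≤ topJ σ := by
  rcases σ.eq_nil_or_concat' with rfl | ⟨D, j, rfl⟩
  · simp at hx
  rw [topJ_concat]
  rcases List.mem_append.1 hx with h | h
  · exact le_of_lt ((List.pairwise_append.1 hpw).2.2 x h j (by simp))
  · simp at h; omega

lemma zero_mem {σ : List ℕ} (h : σ.head? = some 0) : 0 ∈ σ := by
  cases σ with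
  | nil => simp at h
  | cons a l => simp at h; simp [h]

lemma head?_append_ne {σ l : List ℕ} (h : σ ≠ []) : (σ ++ l).head? = σ.head? := by
  cases σ with
  | nil => exact absurd rfl h
  | cons a l' => simp

lemma mem_leftSet_iff {tG : Finset (N × ℕ × ℕ)} {c : Config N} {b : N × ℕ × ℕ} :
    b ∈ leftSet tG c ↔ b ∈ tG ∧ (span b).1 ≤ topI c.σ ∧ topI c.σ < topJ c.σ ∧
      topJ c.σ ≤ (span b).2 ∧
      (Even c.z → ¬(topI c.σ = (span b).1 ∧ topJ c.σ = (span b).2)) ∧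
      (span b).1 ∈ c.σ := by
  simp only [leftSet, Finset.mem_filter, SEnc, Enc, Prod.ext_iff, ne_eq]
  by_cases hz : Even c.z <;> simp [hz] <;> tauto

lemma mem_reach_iff {tG : Finset (N × ℕ × ℕ)} {c : Config N} (h2 : 2 ≤ c.σ.length)
    {b : N × ℕ × ℕ} :
    b ∈ reach tG c ↔ b ∈ leftSet tG c ∨ (b ∈ tG ∧ topJ c.σ ≤ (span b).1) := by
  rw [reach, if_neg (by omega), Finset.mem_union]
  simp only [rightSet, Finset.mem_filter]

lemma exists_next {n : ℕ} {tG : Finset (N × ℕ × ℕ)} (hG : IsGold n tG) {c : Config N}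
    (hne : (leftSet tG c).Nonempty) : ∃ b, IsNext tG c b := by
  obtain ⟨b, hb, hmin⟩ := Finset.exists_min_image _ (fun b => (span b).2 - (span b).1) hne
  refine ⟨b, hb, fun b' hb' => ?_⟩
  obtain ⟨hbG, h1, h2, h3, -, -⟩ := mem_leftSet_iff.1 hb
  obtain ⟨hb'G, h1', -, h3', -, -⟩ := mem_leftSet_iff.1 hb'
  have hv := hG.validSpans b hbG
  have hv' := hG.validSpans b' hb'G
  have hm := hmin b' hb'
  rcases hG.noncrossing b hbG b' hb'G with h | h | h | h
  · exact h
  · obtain ⟨e1, e2, e3⟩ := h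
    have hsp : span b' = span b := Prod.ext_iff.mpr ⟨by omega, by omega⟩
    rw [hG.distinctSpans b' hb'G b hbG hsp]
    exact ⟨le_refl _, hv.1, le_refl _⟩
  · exact absurd h (by omega)
  · exact absurd h (by omega)

lemma reach_sh {n : ℕ} {tG : Finset (N × ℕ × ℕ)} (hG : IsGold n tG) {z : ℕ}
    (hz : Even z) {D : List ℕ} {i j : ℕ}
    (hpw : (D ++ [i, j]).Pairwise (· < ·)) {t : Finset (N × ℕ × ℕ)}
    {b : N × ℕ × ℕ} (hnext : IsNext tG ⟨z, D ++ [i, j], t⟩ b) (hq : j < (span b).2) :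
    reach tG (doAct ⟨z, D ++ [i, j], t⟩ Action.sh) = reach tG ⟨z, D ++ [i, j], t⟩ := by
  obtain ⟨hij, hD⟩ := pw_facts hpw
  obtain ⟨Xb, pb, qb⟩ := b
  simp only [span] at hq
  have hoz : ¬ Even (z + 1) := by simp [Nat.even_add_one, hz]
  have hσ' : (doAct (⟨z, D ++ [i, j], t⟩ : Config N) Action.sh) =
      ⟨z + 1, (D ++ [i]) ++ [j, j + 1], t⟩ := by
    simp [doAct, topJ_concat2]
  rw [hσ']
  ext b'
  obtain ⟨Y, p', q'⟩ := b'
  rw [mem_reach_iff (c := ⟨z + 1, (D ++ [i]) ++ [j, j + 1], t⟩) (by simp),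
    mem_reach_iff (c := ⟨z, D ++ [i, j], t⟩) (by simp),
    mem_leftSet_iff, mem_leftSet_iff]
  simp only [span, topI_concat2, topJ_concat2]
  constructor
  · rintro (⟨hbG, m1, m2, m3, -, m5⟩ | ⟨hbG, hr⟩)
    · -- from left(c')
      rcases Nat.lt_or_ge p' j with hpj | hpj
      · left
        have hp'mem : p' ∈ D ++ [i, j] := by
          simp only [List.mem_append, List.mem_cons, List.not_mem_nil, or_false,
            List.mem_singleton] at m5 ⊢
          rcases m5 with (h | h) | (h | h)
          · tauto
          · tauto
          · omega
          · omega
        have hp'i : p' ≤ i := by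
          rcases List.mem_append.1 hp'mem with h | h
          · exact le_of_lt (hD _ h)
          · simp at h; omega
        exact ⟨hbG, hp'i, hij, by omega, fun _ h => by omega, hp'mem⟩
      · right; exact ⟨hbG, by omega⟩
    · right; exact ⟨hbG, by omega⟩
  · rintro (⟨hbG, m1, m2, m3, m4, m5⟩ | ⟨hbG, hr⟩)
    · -- from left(c); use minimality to get j + 1 ≤ q'
      have hb'L : (Y, p', q') ∈ leftSet tG (⟨z, D ++ [i, j], t⟩ : Config N) := by
        rw [mem_leftSet_iff]
        simp only [span, topI_concat2, topJ_concat2]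
        exact ⟨hbG, m1, m2, m3, m4, m5⟩
      have hmin := hnext.2 _ hb'L
      simp only [Enc, span] at hmin
      left
      refine ⟨hbG, by omega, by omega, by omega, fun h => absurd h hoz, ?_⟩
      simp only [List.mem_append, List.mem_cons, List.not_mem_nil, or_false,
        List.mem_singleton] at m5 ⊢
      tauto
    · -- from right(c)
      have hv := hG.validSpans _ hbG
      simp only [span] at hv
      rcases Nat.lt_or_ge j p' with h | h
      · right; exact ⟨hbG, by omega⟩
      · -- p' = j
        left
        refine ⟨hbG, by omega, by omega, by omega, fun h => absurd h hoz, ?_⟩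
        simp only [List.mem_append, List.mem_cons, List.not_mem_nil, or_false,
          List.mem_singleton]
        omega

lemma reach_comb {n : ℕ} {tG : Finset (N × ℕ × ℕ)} (hG : IsGold n tG) {z : ℕ}
    (hz : Even z) {E : List ℕ} {i' i j : ℕ}
    (hpw : ((E ++ [i']) ++ [i, j]).Pairwise (· < ·)) {t : Finset (N × ℕ × ℕ)}
    {b : N × ℕ × ℕ} (hnext : IsNext tG ⟨z, (E ++ [i']) ++ [i, j], t⟩ b)
    (hq : (span b).2 = j) :
    reach tG (doAct ⟨z, (E ++ [i']) ++ [i, j], t⟩ Action.comb) =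
      reach tG ⟨z, (E ++ [i']) ++ [i, j], t⟩ := by
  obtain ⟨hij, hD⟩ := pw_facts hpw
  have hiE : ∀ x ∈ E, x < i' := pw_facts1 ((List.pairwise_append.1 hpw).1)
  have hi' : i' < i := hD i' (by simp)
  obtain ⟨Xb, pb, qb⟩ := b
  simp only [span] at hq
  have hoz : ¬ Even (z + 1) := by simp [Nat.even_add_one, hz]
  have hbfacts := mem_leftSet_iff.1 hnext.1
  simp only [span, topI_concat2, topJ_concat2] at hbfacts
  obtain ⟨hbG, hbp, -, hbq, hbne, hbmem⟩ := hbfacts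
  have hpbi : pb < i := by
    have := hbne hz
    omega
  have hpbi' : pb ≤ i' := by
    simp only [List.mem_append, List.mem_cons, List.not_mem_nil, or_false,
      List.mem_singleton] at hbmem
    rcases hbmem with (h | h) | (h | h)
    · exact le_of_lt (hiE _ h)
    · omega
    · omega
    · omega
  have hσ' : (doAct (⟨z, (E ++ [i']) ++ [i, j], t⟩ : Config N) Action.comb) =
      ⟨z + 1, E ++ [i', j], t⟩ := by
    show (⟨z + 1, ((E ++ [i']) ++ [i, j]).dropLast.dropLast ++ [topJ ((E ++ [i']) ++ [i, j])],
      t⟩ : Config N) = _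
    rw [dropLast_concat2, List.dropLast_concat, topJ_concat2]
    simp
  rw [hσ']
  ext b'
  obtain ⟨Y, p', q'⟩ := b'
  rw [mem_reach_iff (c := ⟨z + 1, E ++ [i', j], t⟩) (by simp),
    mem_reach_iff (c := ⟨z, (E ++ [i']) ++ [i, j], t⟩) (by simp),
    mem_leftSet_iff, mem_leftSet_iff]
  simp only [span, topI_concat2, topJ_concat2]
  constructor
  · rintro (⟨hbG', m1, m2, m3, -, m5⟩ | ⟨hbG', hr⟩)
    · left
      refine ⟨hbG', by omega, by omega, by omega, fun _ h => by omega, ?_⟩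
      simp only [List.mem_append, List.mem_cons, List.not_mem_nil, or_false,
        List.mem_singleton] at m5 ⊢
      tauto
    · right; exact ⟨hbG', hr⟩
  · rintro (⟨hbG', m1, m2, m3, m4, m5⟩ | ⟨hbG', hr⟩)
    · have hb'L : (Y, p', q') ∈ leftSet tG (⟨z, (E ++ [i']) ++ [i, j], t⟩ : Config N) := by
        rw [mem_leftSet_iff]
        simp only [span, topI_concat2, topJ_concat2]
        exact ⟨hbG', m1, m2, m3, m4, m5⟩
      have hmin := hnext.2 _ hb'L
      simp only [Enc, span] at hmin
      left
      refine ⟨hbG', by omega, by omega, by omega, fun h => absurd h hoz, ?_⟩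
      simp only [List.mem_append, List.mem_cons, List.not_mem_nil, or_false,
        List.mem_singleton] at m5 ⊢
      rcases m5 with (h | h) | (h | h)
      · tauto
      · tauto
      · omega
      · omega
    · right; exact ⟨hbG', hr⟩

lemma tstar_label {n : ℕ} {tG : Finset (N × ℕ × ℕ)} (hG : IsGold n tG) {z : ℕ}
    (hz : ¬ Even z) {D : List ℕ} {i j : ℕ}
    (hpw : (D ++ [i, j]).Pairwise (· < ·)) {t : Finset (N × ℕ × ℕ)}
    {X : N} (hX : (X, i, j) ∈ tG) :
    tstar tG (doAct ⟨z, D ++ [i, j], t⟩ (Action.label X)) =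
      tstar tG ⟨z, D ++ [i, j], t⟩ := by
  obtain ⟨hij, hD⟩ := pw_facts hpw
  have hc' : (doAct (⟨z, D ++ [i, j], t⟩ : Config N) (Action.label X)) =
      ⟨z + 1, D ++ [i, j], insert (X, i, j) t⟩ := by
    simp [doAct, topI_concat2, topJ_concat2]
  rw [tstar, tstar, hc']
  ext b'
  obtain ⟨Y, p', q'⟩ := b'
  simp only [Finset.mem_union, Finset.mem_insert]
  rw [mem_reach_iff (c := ⟨z + 1, D ++ [i, j], insert (X, i, j) t⟩) (by simp),
    mem_reach_iff (c := ⟨z, D ++ [i, j], t⟩) (by simp),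
    mem_leftSet_iff, mem_leftSet_iff]
  simp only [span, topI_concat2, topJ_concat2, Prod.mk.injEq]
  constructor
  · rintro ((⟨rfl, rfl, rfl⟩ | ht) | (⟨hbG, m1, m2, m3, m4, m5⟩ | ⟨hbG, hr⟩))
    · right; left
      exact ⟨hX, le_refl _, hij, le_refl _, fun h => absurd h hz, by simp⟩
    · left; exact ht
    · right; left; exact ⟨hbG, m1, m2, m3, fun h => absurd h hz, m5⟩
    · right; right; exact ⟨hbG, hr⟩
  · rintro (ht | (⟨hbG, m1, m2, m3, m4, m5⟩ | ⟨hbG, hr⟩))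
    · left; right; exact ht
    · by_cases hsp : i = p' ∧ j = q'
      · have hYX : (Y, p', q') = (X, i, j) := by
          apply hG.distinctSpans _ hbG _ hX
          simp [span, hsp.1, hsp.2]
        left; left
        simpa [Prod.mk.injEq] using hYX
      · right; left
        exact ⟨hbG, m1, m2, m3, fun _ => hsp, m5⟩
    · right; right; exact ⟨hbG, hr⟩

lemma reach_nolabel {tG : Finset (N × ℕ × ℕ)} {z : ℕ}
    (hz : ¬ Even z) {D : List ℕ} {i j : ℕ} {t : Finset (N × ℕ × ℕ)}
    (hno : ∀ X : N, (X, i, j) ∉ tG) :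
    reach tG (doAct ⟨z, D ++ [i, j], t⟩ Action.nolabel) =
      reach tG ⟨z, D ++ [i, j], t⟩ := by
  have hc' : (doAct (⟨z, D ++ [i, j], t⟩ : Config N) Action.nolabel) =
      ⟨z + 1, D ++ [i, j], t⟩ := rfl
  rw [hc']
  ext b'
  obtain ⟨Y, p', q'⟩ := b'
  rw [mem_reach_iff (c := ⟨z + 1, D ++ [i, j], t⟩) (by simp),
    mem_reach_iff (c := ⟨z, D ++ [i, j], t⟩) (by simp),
    mem_leftSet_iff, mem_leftSet_iff]
  simp only [span, topI_concat2, topJ_concat2]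
  constructor
  · rintro (⟨hbG, m1, m2, m3, m4, m5⟩ | hr)
    · left; exact ⟨hbG, m1, m2, m3, fun h => absurd h hz, m5⟩
    · right; exact hr
  · rintro (⟨hbG, m1, m2, m3, m4, m5⟩ | hr)
    · left
      refine ⟨hbG, m1, m2, m3, fun _ hcontra => ?_, m5⟩
      apply hno Y
      rw [hcontra.1, hcontra.2]
      exact hbG
    · right; exact hr

lemma reach_sh_init {n : ℕ} {tG : Finset (N × ℕ × ℕ)} (hG : IsGold n tG) {z : ℕ}
    {t : Finset (N × ℕ × ℕ)} (hz : Even z) :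
    reach tG (doAct ⟨z, [0], t⟩ Action.sh) = reach tG ⟨z, [0], t⟩ := by
  have hc' : (doAct (⟨z, [0], t⟩ : Config N) Action.sh) =
      ⟨z + 1, [] ++ [0, 1], t⟩ := by
    simp [doAct, topJ]
  rw [hc']
  have h2 : reach tG (⟨z, [0], t⟩ : Config N) = tG := by
    rw [reach, if_pos (by simp)]
  rw [h2]
  ext b'
  obtain ⟨Y, p', q'⟩ := b'
  rw [mem_reach_iff (c := ⟨z + 1, [] ++ [0, 1], t⟩) (by simp), mem_leftSet_iff]
  simp only [span, topI_concat2, topJ_concat2]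
  constructor
  · rintro (⟨hbG, -⟩ | ⟨hbG, -⟩) <;> exact hbG
  · intro hbG
    have hv := hG.validSpans _ hbG
    simp only [span] at hv
    rcases Nat.eq_zero_or_pos p' with rfl | hp
    · left
      exact ⟨hbG, le_refl _, by omega, by omega,
        fun h => absurd h (by simp [Nat.even_add_one, hz]), by simp⟩
    · right; exact ⟨hbG, by omega⟩

/-- The invariant maintained by valid configurations. -/
structure Inv (n : ℕ) (c : Config N) : Prop where
  ne : c.σ ≠ []
  pw : c.σ.Pairwise (· < ·)
  hd : c.σ.head? = some 0
  top : topJ c.σ ≤ n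
  arith : c.z + 2 * c.σ.length + c.z % 2 = 4 * topJ c.σ + 2
  odd_len : c.z % 2 = 1 → 2 ≤ c.σ.length
  odd_lt : c.z % 2 = 1 → c.z + 2 ≤ 4 * n

lemma inv_initial (n : ℕ) : Inv n (initial N) := by
  refine ⟨by simp [initial], by simp [initial], rfl, ?_, ?_, ?_, ?_⟩ <;>
    simp [initial, topJ]

lemma z_doAct (c : Config N) (a : Action N) : (doAct c a).z = c.z + 1 := by
  cases a <;> rfl

lemma inv_step {n : ℕ} {c : Config N} (hc : Inv n c) (a : Action N)
    (ha : App n c a) : Inv n (doAct c a) := by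
  obtain ⟨z, σ, t⟩ := c
  obtain ⟨hne, hpw, hhd, htop, harith, holen, holt⟩ := hc
  dsimp only at hne hpw hhd htop harith holen holt
  cases a with
  | sh =>
    obtain ⟨hz, -, hlt⟩ := ha
    dsimp only at hz hlt
    have hz0 : z % 2 = 0 := Nat.even_iff.1 hz
    have hlen : 1 ≤ σ.length := List.length_pos_iff.2 hne
    have hσ' : (doAct (⟨z, σ, t⟩ : Config N) Action.sh) =
        ⟨z + 1, σ ++ [topJ σ + 1], t⟩ := rfl
    rw [hσ']
    refine ⟨by simp, ?_, ?_, ?_, ?_, ?_, ?_⟩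
    · show (σ ++ [topJ σ + 1]).Pairwise (· < ·)
      rw [List.pairwise_append]
      refine ⟨hpw, by simp, fun x hx y hy => ?_⟩
      simp at hy
      have := le_topJ hpw hx
      omega
    · show (σ ++ [topJ σ + 1]).head? = some 0
      rw [head?_append_ne hne]; exact hhd
    · show topJ (σ ++ [topJ σ + 1]) ≤ n
      rw [topJ_concat]; omega
    · show z + 1 + 2 * (σ ++ [topJ σ + 1]).length + (z + 1) % 2 =
        4 * topJ (σ ++ [topJ σ + 1]) + 2
      rw [topJ_concat]
      simp only [List.length_append, List.length_cons, List.length_nil]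
      omega
    · intro _
      show 2 ≤ (σ ++ [topJ σ + 1]).length
      simp only [List.length_append, List.length_cons, List.length_nil]
      omega
    · intro _
      show z + 1 + 2 ≤ 4 * n
      omega
  | comb =>
    obtain ⟨hz, hlen3⟩ := ha
    dsimp only at hz hlen3
    have hz0 : z % 2 = 0 := Nat.even_iff.1 hz
    obtain ⟨D, i, j, rfl⟩ := exists_concat2 (σ := σ) (by omega)
    have hlenD : 1 ≤ D.length := by
      simp only [List.length_append, List.length_cons, List.length_nil] at hlen3 ⊢
      omega
    have hDne : D ≠ [] := by
      intro h; rw [h] at hlenD; simp at hlenD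
    obtain ⟨hij, hD⟩ := pw_facts hpw
    have hσ' : (doAct (⟨z, D ++ [i, j], t⟩ : Config N) Action.comb) =
        ⟨z + 1, D ++ [j], t⟩ := by
      show (⟨z + 1, (D ++ [i, j]).dropLast.dropLast ++ [topJ (D ++ [i, j])],
        t⟩ : Config N) = _
      rw [dropLast_concat2, List.dropLast_concat, topJ_concat2]
    rw [hσ']
    rw [topJ_concat2] at htop
    simp only [topJ_concat2, List.length_append, List.length_cons,
      List.length_nil] at harith
    refine ⟨by simp, ?_, ?_, ?_, ?_, ?_, ?_⟩
    · show (D ++ [j]).Pairwise (· < ·)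
      rw [List.pairwise_append]
      refine ⟨(List.pairwise_append.1 hpw).1, by simp, fun x hx y hy => ?_⟩
      simp at hy
      have := hD x hx
      omega
    · show (D ++ [j]).head? = some 0
      rw [head?_append_ne hDne]
      rw [head?_append_ne hDne] at hhd
      exact hhd
    · show topJ (D ++ [j]) ≤ n
      rw [topJ_concat]; omega
    · show z + 1 + 2 * (D ++ [j]).length + (z + 1) % 2 = 4 * topJ (D ++ [j]) + 2
      rw [topJ_concat]
      simp only [List.length_append, List.length_cons, List.length_nil]
      omega
    · intro _
      show 2 ≤ (D ++ [j]).length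
      simp only [List.length_append, List.length_cons, List.length_nil]
      omega
    · intro _
      show z + 1 + 2 ≤ 4 * n
      omega
  | label X =>
    obtain ⟨hz, hlen⟩ := ha
    dsimp only at hz hlen
    have hz1 : z % 2 = 1 := Nat.odd_iff.1 hz
    exact ⟨hne, hpw, hhd, htop, by dsimp only [doAct]; omega,
      fun h => by dsimp only [doAct] at h ⊢; omega,
      fun h => by dsimp only [doAct] at h ⊢; omega⟩
  | nolabel =>
    obtain ⟨hz, hlen, hzlt⟩ := ha
    dsimp only at hz hlen hzlt
    have hz1 : z % 2 = 1 := Nat.odd_iff.1 hz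
    exact ⟨hne, hpw, hhd, htop, by dsimp only [doAct]; omega,
      fun h => by dsimp only [doAct] at h ⊢; omega,
      fun h => by dsimp only [doAct] at h ⊢; omega⟩

lemma valid_inv {n : ℕ} {c : Config N} (hc : Valid n c) : Inv n c := by
  induction hc with
  | refl => exact inv_initial n
  | tail hsteps hstep ih =>
    obtain ⟨a, ha, rfl⟩ := hstep
    exact inv_step ih a ha

lemma Dset_step {n : ℕ} {c c' : Config N} (h : Step n c c') : Dset n c' ⊆ Dset n c := by
  rintro t' ⟨c'', hr, hf, ht⟩
  exact ⟨c'', Relation.ReflTransGen.head h hr, hf, ht⟩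

lemma sigma_single {n : ℕ} {c : Config N} (hc : Inv n c) (hl : c.σ.length < 2) :
    c.σ = [0] ∧ c.z = 0 := by
  obtain ⟨z, σ, t⟩ := c
  obtain ⟨hne, hpw, hhd, htop, harith, holen, holt⟩ := hc
  dsimp only at hne hpw hhd htop harith holen holt
  cases σ with
  | nil => exact absurd rfl hne
  | cons a tl =>
    cases tl with
    | nil =>
      simp only [List.head?_cons, Option.some.injEq] at hhd
      subst hhd
      refine ⟨rfl, ?_⟩
      show z = 0
      have h0 : topJ [0] = 0 := rfl
      rw [h0] at harith
      simp only [List.length_cons, List.length_nil] at harith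
      omega
    | cons b tl2 => simp at hl

lemma main_aux {n : ℕ} (hn : 1 ≤ n) {tG : Finset (N × ℕ × ℕ)} (hG : IsGold n tG) :
    ∀ (k : ℕ) (c : Config N), Inv n c → c.z + k = 4 * n - 2 → tstar tG c ∈ Dset n c := by
  intro k
  induction k with
  | zero =>
    intro c hc hzk
    obtain ⟨z, σ, t⟩ := c
    have hzk' : z = 4 * n - 2 := by simpa using hzk
    have harith := hc.arith
    have htop := hc.top
    have hL : 1 ≤ σ.length := List.length_pos_iff.2 hc.ne
    dsimp only at harith htop
    have hfacts : σ.length = 2 ∧ topJ σ = n := by omega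
    obtain ⟨D, i, j, rfl⟩ := exists_concat2 (σ := σ) (by omega)
    have hDnil : D = [] := by
      have := hfacts.1
      simp only [List.length_append, List.length_cons, List.length_nil] at this
      exact List.length_eq_zero_iff.1 (by omega)
    subst hDnil
    have hi : i = 0 := by
      have := hc.hd
      simp only [List.nil_append, List.head?_cons, Option.some.injEq] at this
      exact this
    have hj : n = j := by
      have := hfacts.2
      rw [topJ_concat2] at this
      omega
    subst hi
    subst hj
    refine ⟨⟨z, [] ++ [0, n], t⟩, Relation.ReflTransGen.refl, ⟨by simp, by simpa using hzk⟩, ?_⟩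
    have hre : reach tG (⟨z, [] ++ [0, n], t⟩ : Config N) = ∅ := by
      ext b
      obtain ⟨Y, p, q⟩ := b
      simp only [Finset.notMem_empty, iff_false]
      rw [mem_reach_iff (c := ⟨z, [] ++ [0, n], t⟩) (by simp), mem_leftSet_iff]
      simp only [span, topI_concat2, topJ_concat2]
      rintro (⟨hbG, m1, m2, m3, m4, m5⟩ | ⟨hbG, hr⟩)
      · have hv := hG.validSpans _ hbG
        simp only [span] at hv
        have hEz : Even z := by rw [Nat.even_iff]; omega
        exact m4 hEz ⟨by omega, by omega⟩
      · have hv := hG.validSpans _ hbG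
        simp only [span] at hv
        omega
    show t = tstar tG _
    rw [tstar, hre]
    simp
  | succ k ih =>
    intro c hc hzk
    obtain ⟨z, σ, t⟩ := c
    have hzk' : z + (k + 1) = 4 * n - 2 := by simpa using hzk
    have key : ∀ a, App n (⟨z, σ, t⟩ : Config N) a →
        tstar tG (doAct ⟨z, σ, t⟩ a) = tstar tG ⟨z, σ, t⟩ →
        tstar tG (⟨z, σ, t⟩ : Config N) ∈ Dset n ⟨z, σ, t⟩ := by
      intro a ha heq
      have h1 := ih (doAct ⟨z, σ, t⟩ a) (inv_step hc a ha)
        (by rw [z_doAct]; dsimp only; omega)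
      rw [← heq]
      exact Dset_step ⟨a, ha, rfl⟩ h1
    by_cases hz : Even z
    · by_cases hl : σ.length < 2
      · -- initial-like configuration: σ = [0]
        obtain ⟨hσ0, hz0⟩ := sigma_single hc hl
        simp only at hσ0
        subst hσ0
        refine key Action.sh ⟨hz, by simp, ?_⟩ ?_
        · show topJ [0] < n
          have : topJ [0] = 0 := rfl
          omega
        · rw [tstar, tstar, reach_sh_init hG hz]
          rfl
      · have hl2 : 2 ≤ σ.length := by omega
        obtain ⟨D, i, j, rfl⟩ := exists_concat2 hl2
        obtain ⟨hij, hD⟩ := pw_facts hc.pw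
        have hjn : j ≤ n := by
          have := hc.top
          simp only [topJ_concat2] at this
          exact this
        have hne0 : ¬(i = 0 ∧ j = n) := by
          rintro ⟨rfl, rfl⟩
          have hDnil : D = [] := by
            rcases D.eq_nil_or_concat' with h | ⟨E, x, rfl⟩
            · exact h
            · exact absurd (hD x (by simp)) (by omega)
          subst hDnil
          have := hc.arith
          simp only [topJ_concat2, List.nil_append, List.length_cons,
            List.length_nil] at this
          have hz0 : z % 2 = 0 := Nat.even_iff.1 hz
          have htj : topJ ([0, j] : List ℕ) = j := by
            simpa using topJ_concat2 [] 0 j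
          omega
        have hroot : (leftSet tG (⟨z, D ++ [i, j], t⟩ : Config N)).Nonempty := by
          obtain ⟨X0, hX0⟩ := hG.root
          refine ⟨(X0, 0, n), mem_leftSet_iff.2 ?_⟩
          simp only [span, topI_concat2, topJ_concat2]
          exact ⟨hX0, Nat.zero_le _, hij, hjn, fun _ h => hne0 h,
            zero_mem hc.hd⟩
        obtain ⟨b, hb⟩ := exists_next hG hroot
        obtain ⟨Xb, pb, qb⟩ := b
        have hbfacts := mem_leftSet_iff.1 hb.1
        simp only [span, topI_concat2, topJ_concat2] at hbfacts
        obtain ⟨hbG, hbp, -, hbq, hbne, hbmem⟩ := hbfacts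
        have hv := hG.validSpans _ hbG
        simp only [span] at hv
        by_cases hqj : qb = j
        · -- comb
          have hpbi : pb < i := by
            have := hbne hz
            omega
          have hpbD : pb ∈ D := by
            simp only [List.mem_append, List.mem_cons, List.not_mem_nil, or_false,
              List.mem_singleton] at hbmem
            rcases hbmem with h | (h | h)
            · exact h
            · omega
            · omega
          have hDne : D ≠ [] := List.ne_nil_of_mem hpbD
          obtain ⟨E, i', rfl⟩ := D.eq_nil_or_concat'.resolve_left hDne
          refine key Action.comb ⟨hz, ?_⟩ ?_
          · show 3 ≤ ((E ++ [i']) ++ [i, j]).length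
            simp only [List.length_append, List.length_cons, List.length_nil]
            omega
          · rw [tstar, tstar, reach_comb hG hz hc.pw hb (by simp [span, hqj])]
            rfl
        · -- sh
          refine key Action.sh ⟨hz, by simp, ?_⟩ ?_
          · show topJ (D ++ [i, j]) < n
            rw [topJ_concat2]
            omega
          · rw [tstar, tstar, reach_sh hG hz hc.pw hb (by simp only [span]; omega)]
            rfl
    · -- odd step
      have hz1 : z % 2 = 1 := Nat.not_even_iff.1 hz
      have hl2 : 2 ≤ σ.length := hc.odd_len hz1
      obtain ⟨D, i, j, rfl⟩ := exists_concat2 hl2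
      by_cases hX : ∃ X, (X, i, j) ∈ tG
      · obtain ⟨X, hX⟩ := hX
        refine key (Action.label X) ⟨Nat.odd_iff.2 hz1, hl2⟩ ?_
        exact tstar_label hG hz hc.pw hX
      · push_neg at hX
        refine key Action.nolabel ⟨Nat.odd_iff.2 hz1, hl2, ?_⟩ ?_
        · have := hc.odd_lt hz1
          dsimp only at this ⊢
          omega
        · rw [tstar, tstar, reach_nolabel hz hX]
          rfl

end OracleProof

/-- Lemma 2: for every valid configuration `c`, the optimal tree is
reachable: `t*(c) ∈ D(c)`. -/
theorem tstar_reachable (n : ℕ) (hn : 1 ≤ n) (tG : Finset (N × ℕ × ℕ))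
    (hG : IsGold n tG) (c : Config N) (hc : Valid n c) :
    tstar tG c ∈ Dset n c := by
  have hInv : Inv n c := valid_inv hc
  have hle : c.z ≤ 4 * n - 2 := by
    have harith := hInv.arith
    have htop := hInv.top
    have hL : 1 ≤ c.σ.length := List.length_pos_iff.2 hInv.ne
    rcases Nat.even_or_odd c.z with he | ho
    · have h0 := Nat.even_iff.1 he
      by_cases hl : 2 ≤ c.σ.length
      · omega
      · obtain ⟨hσ0, hz0⟩ := sigma_single hInv (by omega)
        omega
    · have := hInv.odd_lt (Nat.odd_iff.1 ho)
      omega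
  exact main_aux hn hG (4 * n - 2 - c.z) c hInv (by omega)

end SpanParser
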